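/- For all integers n ≥ 1 and 0 ≤ k ≤ n−1, the number of plane binary trees on n nodes having exactly k nodes with a nonempty left subtree equals the Narayana number N(n,k+1) = (1/n)·binomial(n,k)·binomial(n,k+1). -/

import Mathlib

/-- The number of nodes of a plane binary tree having a nonempty left subtree. -/
def leftNodes : Tree Unit → ℕ
  | BinaryTree.nil => 0
  | BinaryTree.node _ BinaryTree.nil r => leftNodes r
  | BinaryTree.node _ (BinaryTree.node b ll lr) r => 1 + leftNodes (BinaryTree.node b ll lr) + leftNodes r

namespace NarayanaProof

open Tree Finset

@[simp] lemma leftNodes_nil : leftNodes BinaryTree.nil = 0 := rfl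

@[simp] lemma leftNodes_node_nil (a : Unit) (r : Tree Unit) :
    leftNodes (BinaryTree.node a BinaryTree.nil r) = leftNodes r := rfl

@[simp] lemma leftNodes_node_node (a b : Unit) (ll lr r : Tree Unit) :
    leftNodes (BinaryTree.node a (BinaryTree.node b ll lr) r)
      = 1 + leftNodes (BinaryTree.node b ll lr) + leftNodes r := rfl

/-- Length of the right spine of a tree. -/
def spineLen : Tree Unit → ℕ
  | BinaryTree.nil => 0
  | BinaryTree.node _ _ r => spineLen r + 1

@[simp] lemma spineLen_nil : spineLen BinaryTree.nil = 0 := rfl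
@[simp] lemma spineLen_node (a : Unit) (l r : Tree Unit) :
    spineLen (BinaryTree.node a l r) = spineLen r + 1 := rfl

/-- Every node on the right spine has a nonempty left subtree. -/
def spineOK : Tree Unit → Bool
  | BinaryTree.nil => true
  | BinaryTree.node _ BinaryTree.nil _ => false
  | BinaryTree.node _ (BinaryTree.node _ _ _) r => spineOK r

@[simp] lemma spineOK_nil : spineOK BinaryTree.nil = true := rfl
@[simp] lemma spineOK_node_nil (a : Unit) (r : Tree Unit) :
    spineOK (BinaryTree.node a BinaryTree.nil r) = false := rfl
@[simp] lemma spineOK_node_node (a b : Unit) (ll lr r : Tree Unit) :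
    spineOK (BinaryTree.node a (BinaryTree.node b ll lr) r) = spineOK r := rfl

lemma leftNodes_add_spineLen_le : ∀ t : Tree Unit, leftNodes t + spineLen t ≤ t.numNodes
  | BinaryTree.nil => le_refl 0
  | BinaryTree.node _ BinaryTree.nil r => by
      have h := leftNodes_add_spineLen_le r
      simp only [leftNodes_node_nil, spineLen_node, Tree.numNodes, BinaryTree.numNodes] at h ⊢
      omega
  | BinaryTree.node _ (BinaryTree.node b ll lr) r => by
      have h1 := leftNodes_add_spineLen_le (BinaryTree.node b ll lr)
      have h2 := leftNodes_add_spineLen_le r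
      simp only [leftNodes_node_node, spineLen_node, Tree.numNodes, BinaryTree.numNodes] at *
      omega

lemma spineLen_le_leftNodes : ∀ t : Tree Unit, spineOK t = true → spineLen t ≤ leftNodes t
  | BinaryTree.nil, _ => le_refl 0
  | BinaryTree.node _ BinaryTree.nil r, h => by simp at h
  | BinaryTree.node _ (BinaryTree.node b ll lr) r, h => by
      have := spineLen_le_leftNodes r (by simpa using h)
      simp only [leftNodes_node_node, spineLen_node]
      omega

/-- Trees encoding forests of `m` nonempty trees with `n` total nodes and `k` total
left-edges: the forest is hung along the right spine. -/
def forestTrees (n m k : ℕ) : Finset (Tree Unit) :=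
  (BinaryTree.treesOfNumNodesEq (n + m)).filter
    (fun t => spineOK t = true ∧ spineLen t = m ∧ leftNodes t = m + k)

lemma mem_forestTrees {t : Tree Unit} {n m k : ℕ} :
    t ∈ forestTrees n m k ↔
      t.numNodes = n + m ∧ spineOK t = true ∧ spineLen t = m ∧ leftNodes t = m + k := by
  simp [forestTrees]

/-- The shape of the left subtree of the root. -/
def headShape : Tree Unit → ℕ
  | BinaryTree.node _ (BinaryTree.node _ BinaryTree.nil BinaryTree.nil) _ => 0
  | BinaryTree.node _ (BinaryTree.node _ (BinaryTree.node _ _ _) BinaryTree.nil) _ => 1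
  | BinaryTree.node _ (BinaryTree.node _ BinaryTree.nil (BinaryTree.node _ _ _)) _ => 2
  | BinaryTree.node _ (BinaryTree.node _ (BinaryTree.node _ _ _) (BinaryTree.node _ _ _)) _ => 3
  | _ => 4

@[simp] lemma headShape_nil : headShape BinaryTree.nil = 4 := rfl
@[simp] lemma headShape_node_nil (a : Unit) (r : Tree Unit) :
    headShape (BinaryTree.node a BinaryTree.nil r) = 4 := rfl
@[simp] lemma headShape0' (a b : Unit) (r : Tree Unit) :
    headShape (BinaryTree.node a (BinaryTree.node b BinaryTree.nil BinaryTree.nil) r) = 0 := rfl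
@[simp] lemma headShape1' (a b c : Unit) (x y r : Tree Unit) :
    headShape (BinaryTree.node a (BinaryTree.node b (BinaryTree.node c x y) BinaryTree.nil) r) = 1 := rfl
@[simp] lemma headShape2' (a b c : Unit) (x y r : Tree Unit) :
    headShape (BinaryTree.node a (BinaryTree.node b BinaryTree.nil (BinaryTree.node c x y)) r) = 2 := rfl
@[simp] lemma headShape3' (a b c d : Unit) (x y u v r : Tree Unit) :
    headShape (BinaryTree.node a (BinaryTree.node b (BinaryTree.node c x y) (BinaryTree.node d u v)) r) = 3 := rfl

lemma headShape_eq0 {t : Tree Unit} (h : headShape t = 0) :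
    ∃ r, t = BinaryTree.node () (BinaryTree.node () BinaryTree.nil BinaryTree.nil) r := by
  match t with
  | BinaryTree.node _ (BinaryTree.node _ BinaryTree.nil BinaryTree.nil) r => exact ⟨r, rfl⟩
  | BinaryTree.nil => simp at h
  | BinaryTree.node _ BinaryTree.nil _ => simp at h
  | BinaryTree.node _ (BinaryTree.node _ (BinaryTree.node _ _ _) BinaryTree.nil) _ => simp at h
  | BinaryTree.node _ (BinaryTree.node _ BinaryTree.nil (BinaryTree.node _ _ _)) _ => simp at h
  | BinaryTree.node _ (BinaryTree.node _ (BinaryTree.node _ _ _) (BinaryTree.node _ _ _)) _ => simp at h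

lemma headShape_eq1 {t : Tree Unit} (h : headShape t = 1) :
    ∃ x y r, t = BinaryTree.node () (BinaryTree.node () (BinaryTree.node () x y) BinaryTree.nil) r := by
  match t with
  | BinaryTree.node _ (BinaryTree.node _ (BinaryTree.node _ x y) BinaryTree.nil) r => exact ⟨x, y, r, rfl⟩
  | BinaryTree.nil => simp at h
  | BinaryTree.node _ BinaryTree.nil _ => simp at h
  | BinaryTree.node _ (BinaryTree.node _ BinaryTree.nil BinaryTree.nil) _ => simp at h
  | BinaryTree.node _ (BinaryTree.node _ BinaryTree.nil (BinaryTree.node _ _ _)) _ => simp at h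
  | BinaryTree.node _ (BinaryTree.node _ (BinaryTree.node _ _ _) (BinaryTree.node _ _ _)) _ => simp at h

lemma headShape_eq2 {t : Tree Unit} (h : headShape t = 2) :
    ∃ x y r, t = BinaryTree.node () (BinaryTree.node () BinaryTree.nil (BinaryTree.node () x y)) r := by
  match t with
  | BinaryTree.node _ (BinaryTree.node _ BinaryTree.nil (BinaryTree.node _ x y)) r => exact ⟨x, y, r, rfl⟩
  | BinaryTree.nil => simp at h
  | BinaryTree.node _ BinaryTree.nil _ => simp at h
  | BinaryTree.node _ (BinaryTree.node _ BinaryTree.nil BinaryTree.nil) _ => simp at h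
  | BinaryTree.node _ (BinaryTree.node _ (BinaryTree.node _ _ _) BinaryTree.nil) _ => simp at h
  | BinaryTree.node _ (BinaryTree.node _ (BinaryTree.node _ _ _) (BinaryTree.node _ _ _)) _ => simp at h

lemma headShape_eq3 {t : Tree Unit} (h : headShape t = 3) :
    ∃ x y u v r, t = BinaryTree.node () (BinaryTree.node () (BinaryTree.node () x y) (BinaryTree.node () u v)) r := by
  match t with
  | BinaryTree.node _ (BinaryTree.node _ (BinaryTree.node _ x y) (BinaryTree.node _ u v)) r => exact ⟨x, y, u, v, r, rfl⟩
  | BinaryTree.nil => simp at h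
  | BinaryTree.node _ BinaryTree.nil _ => simp at h
  | BinaryTree.node _ (BinaryTree.node _ BinaryTree.nil BinaryTree.nil) _ => simp at h
  | BinaryTree.node _ (BinaryTree.node _ (BinaryTree.node _ _ _) BinaryTree.nil) _ => simp at h
  | BinaryTree.node _ (BinaryTree.node _ BinaryTree.nil (BinaryTree.node _ _ _)) _ => simp at h

/-- a tree with positive spine length and a good spine starts with a node with
nonempty left child. -/
lemma spine_shape {t : Tree Unit} (hok : spineOK t = true) (hsl : 0 < spineLen t) :
    ∃ x y r, t = BinaryTree.node () (BinaryTree.node () x y) r := by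
  match t with
  | BinaryTree.nil => simp at hsl
  | BinaryTree.node _ BinaryTree.nil _ => simp at hok
  | BinaryTree.node _ (BinaryTree.node _ x y) r => exact ⟨x, y, r, rfl⟩

def put0 (r : Tree Unit) : Tree Unit := BinaryTree.node () (BinaryTree.node () BinaryTree.nil BinaryTree.nil) r

def strip0 : Tree Unit → Tree Unit
  | BinaryTree.node _ _ r => r
  | t => t

def put1 : Tree Unit → Tree Unit
  | BinaryTree.node _ a r => BinaryTree.node () (BinaryTree.node () a BinaryTree.nil) r
  | t => t

def strip1 : Tree Unit → Tree Unit
  | BinaryTree.node _ (BinaryTree.node _ a _) r => BinaryTree.node () a r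
  | t => t

def put2 : Tree Unit → Tree Unit
  | BinaryTree.node _ b r => BinaryTree.node () (BinaryTree.node () BinaryTree.nil b) r
  | t => t

def strip2 : Tree Unit → Tree Unit
  | BinaryTree.node _ (BinaryTree.node _ _ b) r => BinaryTree.node () b r
  | t => t

def put3 : Tree Unit → Tree Unit
  | BinaryTree.node _ a (BinaryTree.node _ b r) => BinaryTree.node () (BinaryTree.node () a b) r
  | t => t

def strip3 : Tree Unit → Tree Unit
  | BinaryTree.node _ (BinaryTree.node _ a b) r => BinaryTree.node () a (BinaryTree.node () b r)
  | t => t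

lemma card_fiber0 (n m K : ℕ) :
    ((forestTrees (n+1) (m+1) K).filter (fun t => headShape t = 0)).card
      = (forestTrees n m K).card := by
  apply Finset.card_bij' (fun a _ => strip0 a) (fun b _ => put0 b)
  · intro t ht
    rw [Finset.mem_filter, mem_forestTrees] at ht
    obtain ⟨⟨hnn, hok, hsl, hln⟩, hsh⟩ := ht
    obtain ⟨r, rfl⟩ := headShape_eq0 hsh
    rw [show strip0 (BinaryTree.node () (BinaryTree.node () BinaryTree.nil BinaryTree.nil) r) = r from rfl,
      mem_forestTrees]
    simp only [Tree.numNodes, BinaryTree.numNodes, spineOK_node_node, spineLen_node, leftNodes_node_node,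
      leftNodes_node_nil, leftNodes_nil, spineOK_nil, spineLen_nil] at hnn hok hsl hln ⊢
    exact ⟨by omega, hok, by omega, by omega⟩
  · intro t ht
    rw [mem_forestTrees] at ht
    obtain ⟨hnn, hok, hsl, hln⟩ := ht
    rw [Finset.mem_filter, mem_forestTrees]
    constructor
    · simp only [put0, Tree.numNodes, BinaryTree.numNodes, spineOK_node_node, spineLen_node, leftNodes_node_node,
        leftNodes_node_nil, leftNodes_nil, spineOK_nil, spineLen_nil] at hnn ⊢
      exact ⟨by omega, hok, by omega, by omega⟩
    · simp [put0]
  · intro t ht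
    rw [Finset.mem_filter] at ht
    obtain ⟨r, rfl⟩ := headShape_eq0 ht.2
    rfl
  · intro t _
    rfl

lemma card_fiber1 (n m k : ℕ) :
    ((forestTrees (n+1) (m+1) (k+1)).filter (fun t => headShape t = 1)).card
      = (forestTrees n (m+1) k).card := by
  apply Finset.card_bij' (fun a _ => strip1 a) (fun b _ => put1 b)
  · intro t ht
    rw [Finset.mem_filter, mem_forestTrees] at ht
    obtain ⟨⟨hnn, hok, hsl, hln⟩, hsh⟩ := ht
    obtain ⟨x, y, r, rfl⟩ := headShape_eq1 hsh
    rw [show strip1 (BinaryTree.node () (BinaryTree.node () (BinaryTree.node () x y) BinaryTree.nil) r)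
        = BinaryTree.node () (BinaryTree.node () x y) r from rfl, mem_forestTrees]
    simp only [Tree.numNodes, BinaryTree.numNodes, spineOK_node_node, spineLen_node, leftNodes_node_node,
      leftNodes_node_nil, leftNodes_nil, spineOK_nil, spineLen_nil] at hnn hok hsl hln ⊢
    exact ⟨by omega, hok, by omega, by omega⟩
  · intro t ht
    rw [mem_forestTrees] at ht
    obtain ⟨hnn, hok, hsl, hln⟩ := ht
    obtain ⟨x, y, r, rfl⟩ := spine_shape hok (by omega)
    rw [Finset.mem_filter, mem_forestTrees]
    refine ⟨?_, by simp [put1]⟩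
    simp only [put1, Tree.numNodes, BinaryTree.numNodes, spineOK_node_node, spineLen_node, leftNodes_node_node,
      leftNodes_node_nil, leftNodes_nil, spineOK_nil, spineLen_nil] at hnn hok hsl hln ⊢
    exact ⟨by omega, hok, by omega, by omega⟩
  · intro t ht
    rw [Finset.mem_filter] at ht
    obtain ⟨x, y, r, rfl⟩ := headShape_eq1 ht.2
    rfl
  · intro t ht
    rw [mem_forestTrees] at ht
    obtain ⟨hnn, hok, hsl, hln⟩ := ht
    obtain ⟨x, y, r, rfl⟩ := spine_shape hok (by omega)
    rfl

lemma card_fiber2 (n m K : ℕ) :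
    ((forestTrees (n+1) (m+1) K).filter (fun t => headShape t = 2)).card
      = (forestTrees n (m+1) K).card := by
  apply Finset.card_bij' (fun a _ => strip2 a) (fun b _ => put2 b)
  · intro t ht
    rw [Finset.mem_filter, mem_forestTrees] at ht
    obtain ⟨⟨hnn, hok, hsl, hln⟩, hsh⟩ := ht
    obtain ⟨x, y, r, rfl⟩ := headShape_eq2 hsh
    rw [show strip2 (BinaryTree.node () (BinaryTree.node () BinaryTree.nil (BinaryTree.node () x y)) r)
        = BinaryTree.node () (BinaryTree.node () x y) r from rfl, mem_forestTrees]
    simp only [Tree.numNodes, BinaryTree.numNodes, spineOK_node_node, spineLen_node, leftNodes_node_node,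
      leftNodes_node_nil, leftNodes_nil, spineOK_nil, spineLen_nil] at hnn hok hsl hln ⊢
    exact ⟨by omega, hok, by omega, by omega⟩
  · intro t ht
    rw [mem_forestTrees] at ht
    obtain ⟨hnn, hok, hsl, hln⟩ := ht
    obtain ⟨x, y, r, rfl⟩ := spine_shape hok (by omega)
    rw [Finset.mem_filter, mem_forestTrees]
    refine ⟨?_, by simp [put2]⟩
    simp only [put2, Tree.numNodes, BinaryTree.numNodes, spineOK_node_node, spineLen_node, leftNodes_node_node,
      leftNodes_node_nil, leftNodes_nil, spineOK_nil, spineLen_nil] at hnn hok hsl hln ⊢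
    exact ⟨by omega, hok, by omega, by omega⟩
  · intro t ht
    rw [Finset.mem_filter] at ht
    obtain ⟨x, y, r, rfl⟩ := headShape_eq2 ht.2
    rfl
  · intro t ht
    rw [mem_forestTrees] at ht
    obtain ⟨hnn, hok, hsl, hln⟩ := ht
    obtain ⟨x, y, r, rfl⟩ := spine_shape hok (by omega)
    rfl

lemma card_fiber3 (n m k : ℕ) :
    ((forestTrees (n+1) (m+1) (k+1)).filter (fun t => headShape t = 3)).card
      = (forestTrees n (m+2) k).card := by
  apply Finset.card_bij' (fun a _ => strip3 a) (fun b _ => put3 b)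
  · intro t ht
    rw [Finset.mem_filter, mem_forestTrees] at ht
    obtain ⟨⟨hnn, hok, hsl, hln⟩, hsh⟩ := ht
    obtain ⟨x, y, u, v, r, rfl⟩ := headShape_eq3 hsh
    rw [show strip3 (BinaryTree.node () (BinaryTree.node () (BinaryTree.node () x y) (BinaryTree.node () u v)) r)
        = BinaryTree.node () (BinaryTree.node () x y) (BinaryTree.node () (BinaryTree.node () u v) r) from rfl,
      mem_forestTrees]
    simp only [Tree.numNodes, BinaryTree.numNodes, spineOK_node_node, spineLen_node, leftNodes_node_node,
      leftNodes_node_nil, leftNodes_nil, spineOK_nil, spineLen_nil] at hnn hok hsl hln ⊢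
    exact ⟨by omega, hok, by omega, by omega⟩
  · intro t ht
    rw [mem_forestTrees] at ht
    obtain ⟨hnn, hok, hsl, hln⟩ := ht
    obtain ⟨x, y, r, rfl⟩ := spine_shape hok (by omega)
    have hok' : spineOK r = true := by simpa using hok
    have hslr : 0 < spineLen r := by
      simp only [spineLen_node] at hsl; omega
    obtain ⟨u, v, r', rfl⟩ := spine_shape hok' hslr
    rw [Finset.mem_filter, mem_forestTrees]
    refine ⟨?_, by simp [put3]⟩
    simp only [put3, Tree.numNodes, BinaryTree.numNodes, spineOK_node_node, spineLen_node, leftNodes_node_node,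
      leftNodes_node_nil, leftNodes_nil, spineOK_nil, spineLen_nil] at hnn hok hsl hln ⊢
    exact ⟨by omega, by simpa using hok, by omega, by omega⟩
  · intro t ht
    rw [Finset.mem_filter] at ht
    obtain ⟨x, y, u, v, r, rfl⟩ := headShape_eq3 ht.2
    rfl
  · intro t ht
    rw [mem_forestTrees] at ht
    obtain ⟨hnn, hok, hsl, hln⟩ := ht
    obtain ⟨x, y, r, rfl⟩ := spine_shape hok (by omega)
    have hok' : spineOK r = true := by simpa using hok
    have hslr : 0 < spineLen r := by
      simp only [spineLen_node] at hsl; omega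
    obtain ⟨u, v, r', rfl⟩ := spine_shape hok' hslr
    rfl

lemma headShape_lt_four {t : Tree Unit} {n m K : ℕ} (ht : t ∈ forestTrees (n+1) (m+1) K) :
    headShape t ∈ Finset.range 4 := by
  rw [mem_forestTrees] at ht
  obtain ⟨hnn, hok, hsl, hln⟩ := ht
  obtain ⟨x, y, r, rfl⟩ := spine_shape hok (by omega)
  rw [Finset.mem_range]
  match x, y with
  | BinaryTree.nil, BinaryTree.nil => simp
  | BinaryTree.nil, BinaryTree.node _ _ _ => simp
  | BinaryTree.node _ _ _, BinaryTree.nil => simp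
  | BinaryTree.node _ _ _, BinaryTree.node _ _ _ => simp

lemma card_fiber1_zero (n m : ℕ) :
    ((forestTrees (n+1) (m+1) 0).filter (fun t => headShape t = 1)).card = 0 := by
  rw [Finset.card_eq_zero, Finset.eq_empty_iff_forall_notMem]
  intro t ht
  rw [Finset.mem_filter, mem_forestTrees] at ht
  obtain ⟨⟨hnn, hok, hsl, hln⟩, hsh⟩ := ht
  obtain ⟨x, y, r, rfl⟩ := headShape_eq1 hsh
  have hr : spineLen r ≤ leftNodes r := spineLen_le_leftNodes r (by simpa using hok)
  simp only [leftNodes_node_node, leftNodes_node_nil, leftNodes_nil, spineLen_node] at hln hsl hr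
  omega

lemma card_fiber3_zero (n m : ℕ) :
    ((forestTrees (n+1) (m+1) 0).filter (fun t => headShape t = 3)).card = 0 := by
  rw [Finset.card_eq_zero, Finset.eq_empty_iff_forall_notMem]
  intro t ht
  rw [Finset.mem_filter, mem_forestTrees] at ht
  obtain ⟨⟨hnn, hok, hsl, hln⟩, hsh⟩ := ht
  obtain ⟨x, y, u, v, r, rfl⟩ := headShape_eq3 hsh
  have hr : spineLen r ≤ leftNodes r := spineLen_le_leftNodes r (by simpa using hok)
  simp only [leftNodes_node_node, leftNodes_node_nil, leftNodes_nil, spineLen_node] at hln hsl hr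
  omega

lemma card_partition (n m K : ℕ) :
    (forestTrees (n+1) (m+1) K).card
      = ((forestTrees (n+1) (m+1) K).filter (fun t => headShape t = 0)).card
        + ((forestTrees (n+1) (m+1) K).filter (fun t => headShape t = 1)).card
        + ((forestTrees (n+1) (m+1) K).filter (fun t => headShape t = 2)).card
        + ((forestTrees (n+1) (m+1) K).filter (fun t => headShape t = 3)).card := by
  rw [Finset.card_eq_sum_card_fiberwise (f := headShape) (t := Finset.range 4)
    (fun x hx => headShape_lt_four hx)]
  rw [show (4 : ℕ) = 3 + 1 from rfl, Finset.sum_range_succ, Finset.sum_range_succ,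
    Finset.sum_range_succ, Finset.sum_range_one]

lemma card_rec_succ (n m k : ℕ) :
    (forestTrees (n+1) (m+1) (k+1)).card
      = (forestTrees n m (k+1)).card + (forestTrees n (m+1) k).card
        + (forestTrees n (m+1) (k+1)).card + (forestTrees n (m+2) k).card := by
  rw [card_partition, card_fiber0, card_fiber1, card_fiber2, card_fiber3]

lemma card_rec_zero (n m : ℕ) :
    (forestTrees (n+1) (m+1) 0).card
      = (forestTrees n m 0).card + (forestTrees n (m+1) 0).card := by
  rw [card_partition, card_fiber0, card_fiber1_zero, card_fiber2]
  rw [card_fiber3_zero]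
  omega

lemma card_base_zero_zero : (forestTrees 0 0 0).card = 1 := by
  have : forestTrees 0 0 0 = {BinaryTree.nil} := by
    ext t
    rw [mem_forestTrees, Finset.mem_singleton]
    constructor
    · rintro ⟨hnn, -, -, -⟩
      cases t with
      | nil => rfl
      | node a l r => simp [Tree.numNodes, BinaryTree.numNodes] at hnn
    · rintro rfl
      exact ⟨rfl, rfl, rfl, rfl⟩
  rw [this, Finset.card_singleton]

lemma card_base_zero_succ (k : ℕ) : (forestTrees 0 0 (k+1)).card = 0 := by
  rw [Finset.card_eq_zero, Finset.eq_empty_iff_forall_notMem]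
  intro t ht
  rw [mem_forestTrees] at ht
  obtain ⟨hnn, -, hsl, hln⟩ := ht
  have := leftNodes_add_spineLen_le t
  omega

lemma card_base_zero_m (m k : ℕ) : (forestTrees 0 (m+1) k).card = 0 := by
  rw [Finset.card_eq_zero, Finset.eq_empty_iff_forall_notMem]
  intro t ht
  rw [mem_forestTrees] at ht
  obtain ⟨hnn, -, hsl, hln⟩ := ht
  have := leftNodes_add_spineLen_le t
  omega

lemma card_base_m_zero (n k : ℕ) : (forestTrees (n+1) 0 k).card = 0 := by
  rw [Finset.card_eq_zero, Finset.eq_empty_iff_forall_notMem]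
  intro t ht
  rw [mem_forestTrees] at ht
  obtain ⟨hnn, -, hsl, hln⟩ := ht
  cases t with
  | nil => simp [Tree.numNodes, BinaryTree.numNodes] at hnn
  | node a l r => simp at hsl

/-- The recursively-defined forest counting function. -/
def G : ℕ → ℕ → ℕ → ℕ
  | 0, 0, 0 => 1
  | 0, 0, _+1 => 0
  | 0, _+1, _ => 0
  | _+1, 0, _ => 0
  | n+1, m+1, 0 => G n m 0 + G n (m+1) 0
  | n+1, m+1, k+1 => G n m (k+1) + G n (m+1) k + G n (m+1) (k+1) + G n (m+2) k

lemma card_forestTrees : ∀ n m k : ℕ, (forestTrees n m k).card = G n m k := by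
  intro n
  induction n with
  | zero =>
    intro m k
    match m, k with
    | 0, 0 => rw [card_base_zero_zero]; rfl
    | 0, k+1 => rw [card_base_zero_succ]; rfl
    | m+1, k => rw [card_base_zero_m]; rfl
  | succ n ih =>
    intro m k
    match m, k with
    | 0, k => rw [card_base_m_zero]; rfl
    | m+1, 0 => rw [card_rec_zero, ih, ih]; rfl
    | m+1, k+1 => rw [card_rec_succ, ih, ih, ih, ih]; rfl

lemma choose_absorb (n j : ℕ) :
    (n.choose (j+1) : ℚ) * ((j : ℚ) + 1) = (n.choose j : ℚ) * ((n : ℚ) - (j : ℚ)) := by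
  rcases le_or_gt j n with h | h
  · have h1 : n.choose (j+1) * (j+1) = n.choose j * (n - j) := Nat.choose_succ_right_eq n j
    have h2 : ((n - j : ℕ) : ℚ) = (n : ℚ) - (j : ℚ) := by
      rw [Nat.cast_sub h]
    calc (n.choose (j+1) : ℚ) * ((j : ℚ) + 1) = ((n.choose (j+1) * (j+1) : ℕ) : ℚ) := by
          push_cast; ring
      _ = ((n.choose j * (n - j) : ℕ) : ℚ) := by rw [h1]
      _ = (n.choose j : ℚ) * ((n : ℚ) - (j : ℚ)) := by rw [Nat.cast_mul, h2]
  · have h1 : n.choose (j+1) = 0 := Nat.choose_eq_zero_of_lt (by omega)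
    have h2 : n.choose j = 0 := Nat.choose_eq_zero_of_lt h
    rw [h1, h2]
    simp

/-- The key binomial identity behind the Narayana recurrence. -/
lemma key_identity (n m k : ℕ) :
    (n : ℚ) * ((m : ℚ) + 1) * ((n.choose k : ℚ) + (n.choose (k+1) : ℚ))
        * ((n.choose (k+m+1) : ℚ) + (n.choose (k+m+2) : ℚ))
      = ((n : ℚ) + 1) * ((m : ℚ) * (n.choose (k+1) : ℚ) * (n.choose (k+m+1) : ℚ)
          + ((m : ℚ) + 1) * (n.choose k : ℚ) * (n.choose (k+m+1) : ℚ)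
          + ((m : ℚ) + 1) * (n.choose (k+1) : ℚ) * (n.choose (k+m+2) : ℚ)
          + ((m : ℚ) + 2) * (n.choose k : ℚ) * (n.choose (k+m+2) : ℚ)) := by
  have h1 := choose_absorb n k
  have h2 := choose_absorb n (k+m+1)
  push_cast at h1 h2
  set A := (n.choose k : ℚ)
  set B := (n.choose (k+1) : ℚ)
  set C := (n.choose (k+m+1) : ℚ)
  set D := (n.choose (k+m+2) : ℚ)
  set N := (n : ℚ)
  set M := (m : ℚ)
  set K := (k : ℚ)
  have hne : (K + 1) * (K + M + 2) ≠ 0 := by positivity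
  apply mul_left_cancel₀ hne
  -- h1 : B * (K + 1) = A * (N - K)
  -- h2 : D * (K + M + 1 + 1) = C * (N - (K + M + 1))
  linear_combination ((N - M) * (K + M + 2) * C - (M + 1) * (N - K - M - 1) * C
        - (M + 1) * (D * (K + M + 2) - C * (N - K - M - 1))) * h1
      + (-(N + M + 2) * (K + 1) * A - (M + 1) * (N - K) * A) * h2

@[simp] lemma G_zero_mk (m k : ℕ) : G 0 (m+1) k = 0 := rfl
@[simp] lemma G_zero_k (k : ℕ) : G 0 0 (k+1) = 0 := rfl
lemma G_zero_succk (m k : ℕ) : G 0 m (k+1) = 0 := by cases m <;> rfl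
@[simp] lemma G_succ_zero (n k : ℕ) : G (n+1) 0 k = 0 := rfl
lemma G_rec_zero (n m : ℕ) : G (n+1) (m+1) 0 = G n m 0 + G n (m+1) 0 := rfl
lemma G_rec_succ (n m k : ℕ) :
    G (n+1) (m+1) (k+1) = G n m (k+1) + G n (m+1) k + G n (m+1) (k+1) + G n (m+2) k := rfl

lemma G_formula : ∀ n : ℕ, 1 ≤ n → ∀ m k : ℕ,
    (G n m k : ℚ) * (n : ℚ) = (m : ℚ) * (n.choose k : ℚ) * (n.choose (k+m) : ℚ) := by
  intro n
  induction n with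
  | zero => omega
  | succ n ih =>
    intro _ m k
    rcases Nat.eq_zero_or_pos n with rfl | hn
    · -- base case n = 1
      match m, k with
      | 0, k => simp
      | m+1, 0 =>
        match m with
        | 0 => rw [G_rec_zero]; norm_num [show G 0 0 0 = 1 from rfl, show G 0 1 0 = 0 from rfl]
        | m+1 =>
          rw [G_rec_zero]
          simp [Nat.choose_eq_zero_of_lt (show 1 < m + 2 by omega)]
      | m+1, k+1 =>
        rw [G_rec_succ, G_zero_succk]
        simp [Nat.choose_eq_zero_of_lt (show 1 < k + 1 + (m + 1) by omega), G_zero_succk]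
    · -- inductive step
      have hn0 : (n : ℚ) ≠ 0 := by positivity
      match m, k with
      | 0, k => simp
      | m+1, 0 =>
        have e1 := ih hn m 0
        have e2 := ih hn (m+1) 0
        have h1 := choose_absorb n m
        have pas : ((n+1).choose (m+1) : ℚ) = (n.choose m : ℚ) + (n.choose (m+1) : ℚ) := by
          rw [Nat.choose_succ_succ]; push_cast; ring
        rw [G_rec_zero]
        simp only [Nat.zero_add]
        push_cast [pas, Nat.choose_zero_right]
        apply mul_left_cancel₀ hn0
        push_cast [Nat.choose_zero_right, Nat.zero_add] at e1 e2
        linear_combination ((n : ℚ) + 1) * e1 + ((n : ℚ) + 1) * e2 + h1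
      | m+1, k+1 =>
        have e1 := ih hn m (k+1)
        have e2 := ih hn (m+1) k
        have e3 := ih hn (m+1) (k+1)
        have e4 := ih hn (m+2) k
        have key := key_identity n m k
        have i1 : k+1+m = k+m+1 := by omega
        have i2 : k+(m+1) = k+m+1 := by omega
        have i3 : k+1+(m+1) = k+m+2 := by omega
        have i4 : k+(m+2) = k+m+2 := by omega
        rw [i1] at e1
        rw [i2] at e2
        rw [i3] at e3
        rw [i4] at e4
        have pas1 : ((n+1).choose (k+1) : ℚ) = (n.choose k : ℚ) + (n.choose (k+1) : ℚ) := by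
          rw [Nat.choose_succ_succ]; push_cast; ring
        have pas2 : ((n+1).choose (k+m+2) : ℚ)
            = (n.choose (k+m+1) : ℚ) + (n.choose (k+m+2) : ℚ) := by
          rw [show k+m+2 = (k+m+1)+1 from rfl, Nat.choose_succ_succ]; push_cast; ring
        rw [G_rec_succ]
        have i5 : k+1+(m+1) = k+m+2 := by omega
        rw [i5]
        push_cast [pas1, pas2]
        apply mul_left_cancel₀ hn0
        push_cast at e1 e2 e3 e4
        linear_combination ((n : ℚ) + 1) * e1 + ((n : ℚ) + 1) * e2 + ((n : ℚ) + 1) * e3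
          + ((n : ℚ) + 1) * e4 - key

def getLeft : Tree Unit → Tree Unit
  | BinaryTree.node _ l _ => l
  | t => t

lemma card_m1 (n k : ℕ) (hn : 1 ≤ n) :
    ((BinaryTree.treesOfNumNodesEq n).filter (fun t => leftNodes t = k)).card
      = (forestTrees n 1 k).card := by
  apply Finset.card_bij' (fun t _ => BinaryTree.node () t BinaryTree.nil) (fun u _ => getLeft u)
  · intro t ht
    rw [Finset.mem_filter, BinaryTree.mem_treesOfNumNodesEq] at ht
    obtain ⟨hnn, hlk⟩ := ht
    match t with
    | BinaryTree.nil => simp [Tree.numNodes, BinaryTree.numNodes] at hnn; omega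
    | BinaryTree.node a l r =>
      rw [mem_forestTrees]
      refine ⟨?_, ?_, ?_, ?_⟩
      · simp only [Tree.numNodes, BinaryTree.numNodes] at hnn ⊢; omega
      · simp
      · simp
      · simp only [leftNodes_node_node, leftNodes_nil]
        omega
  · intro u hu
    rw [mem_forestTrees] at hu
    obtain ⟨hnn, hok, hsl, hln⟩ := hu
    obtain ⟨x, y, r, rfl⟩ := spine_shape hok (by omega)
    have hr : spineLen r = 0 := by
      simp only [spineLen_node] at hsl; omega
    match r, hr with
    | BinaryTree.nil, _ =>
      show BinaryTree.node () x y ∈ _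
      rw [Finset.mem_filter, BinaryTree.mem_treesOfNumNodesEq]
      simp only [Tree.numNodes, BinaryTree.numNodes, leftNodes_node_node, leftNodes_nil] at hnn hln
      constructor
      · simp only [Tree.numNodes, BinaryTree.numNodes]
        omega
      · omega
  · intro t ht
    rfl
  · intro u hu
    rw [mem_forestTrees] at hu
    obtain ⟨hnn, hok, hsl, hln⟩ := hu
    obtain ⟨x, y, r, rfl⟩ := spine_shape hok (by omega)
    have hr : spineLen r = 0 := by
      simp only [spineLen_node] at hsl; omega
    match r, hr with
    | BinaryTree.nil, _ => rfl

end NarayanaProof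

/-- The number of plane binary trees on `n` nodes having exactly `k` nodes with a
nonempty left subtree equals the Narayana number
`N(n,k+1) = (1/n) * choose n k * choose n (k+1)` (stated multiplied through by `n` to
avoid rational arithmetic). -/
theorem card_trees_leftNodes_eq_narayana (n k : ℕ) (hn : 1 ≤ n) (hk : k ≤ n - 1) :
    n * Nat.card {t : Tree Unit | t.numNodes = n ∧ leftNodes t = k} =
    n.choose k * n.choose (k + 1) := by
  classical
  have hset : {t : Tree Unit | t.numNodes = n ∧ leftNodes t = k}
      = ↑((BinaryTree.treesOfNumNodesEq n).filter (fun t => leftNodes t = k)) := by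
    ext t
    simp [BinaryTree.mem_treesOfNumNodesEq]
  rw [hset, Nat.card_coe_set_eq, Set.ncard_coe_finset,
    NarayanaProof.card_m1 n k hn, NarayanaProof.card_forestTrees]
  have h := NarayanaProof.G_formula n hn 1 k
  have hq : ((n * NarayanaProof.G n 1 k : ℕ) : ℚ)
      = ((n.choose k * n.choose (k+1) : ℕ) : ℚ) := by
    push_cast
    push_cast at h
    linear_combination h
  exact_mod_cast hq
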